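/- Let F be a finite set of N > 0 function symbols with arities ar, T(F) the ground terms over F, < an irreflexive transitive relation on T(F) containing the subterm relation, and for each f ∈ F a relation <_f on ar(f)-tuples, such that: if f(b) < f(a) then f(b) ≤ a_i for some component a_i of a or b <_f a; and if every component of a tuple a is in the accessible part W(<), then a is in the accessible part W(<_f). Let f_1, …, f_K ∈ F be distinct function symbols and a_i an ar(f_i)-tuple of terms for each i. For a function symbol f define T_{f,0} to be all ar(f)-tuples, T_{f,i} := { b : f(b) < f_i(a_i) } for i ≥ 1, A_{f,i}(b) :⇔ [b ∈ T_{f,i} → (every component of b is in W(<)) → f(b) ∈ W(<)], and IH_{f,i}(a) :⇔ ∀ b <_f a, A_{f,i}(b). Assume for every i = 1, …, K: (1) f_{i+1}(a_{i+1}) < f_i(a_i) (for i < K); (2) IH_{f_i, i−1}(a_i); (3) every component of a_i is in W(<). Then f_K(a_K) ∈ W(<). -/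

import Mathlib

/-- Ground terms over a signature `F` with arity function `ar`,
modeled as the W-type of finitely branching trees. -/
def Term (F : Type) (ar : F → ℕ) : Type := WType (fun f : F => Fin (ar f))


theorem fz_aux
    {F : Type} [Fintype F] (ar : F → ℕ)
    (lt : Term F ar → Term F ar → Prop)
    (ltf : ∀ f : F, (Fin (ar f) → Term F ar) → (Fin (ar f) → Term F ar) → Prop)
    (htrans : ∀ s t u, lt s t → lt t u → lt s u)
    (hsub : ∀ (f : F) (a : Fin (ar f) → Term F ar) (i : Fin (ar f)),
      lt (a i) (WType.mk f a))
    (hdec : ∀ (f : F) (a b : Fin (ar f) → Term F ar),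
      lt (WType.mk f b) (WType.mk f a) →
      (∃ i, WType.mk f b = a i ∨ lt (WType.mk f b) (a i)) ∨ ltf f b a)
    (hacc : ∀ (f : F) (a : Fin (ar f) → Term F ar),
      (∀ i, Acc lt (a i)) → Acc (ltf f) a) :
    ∀ (n K : ℕ) (hK : 0 < K), Fintype.card F + 1 - K ≤ n →
    ∀ (p : Fin K → Σ g : F, (Fin (ar g) → Term F ar)),
      Function.Injective (fun i => (p i).1) →
      (∀ (i : Fin K) (h : i.val + 1 < K),
        lt (WType.mk (p ⟨i.val + 1, h⟩).1 (p ⟨i.val + 1, h⟩).2)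
           (WType.mk (p i).1 (p i).2)) →
      (∀ (i : Fin K) (b : Fin (ar (p i).1) → Term F ar), ltf (p i).1 b (p i).2 →
        (∀ h : 0 < i.val,
          lt (WType.mk (p i).1 b)
             (WType.mk (p ⟨i.val - 1, (by omega : i.val - 1 + 0 < K)⟩).1 (p ⟨i.val - 1, (by omega : i.val - 1 + 0 < K)⟩).2)) →
        (∀ j, Acc lt (b j)) → Acc lt (WType.mk (p i).1 b)) →
      (∀ (i : Fin K) (j : Fin (ar (p i).1)), Acc lt ((p i).2 j)) →
      Acc lt (WType.mk (p ⟨K - 1, (by omega : K - 1 + 0 < K)⟩).1 (p ⟨K - 1, (by omega : K - 1 + 0 < K)⟩).2) := by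
  intro n
  induction n with
  | zero =>
    intro K hK hn p hinj _ _ _
    exfalso
    have hle := Fintype.card_le_of_injective _ hinj
    simp [Fintype.card_fin] at hle
    omega
  | succ n IH =>
    intro K hK hn p hinj h1 h2 h3
    have chain0 : ∀ (m : ℕ) (i : Fin K) (h : i.val + m + 1 < K),
        lt (WType.mk (p ⟨i.val + m + 1, h⟩).1 (p ⟨i.val + m + 1, h⟩).2)
           (WType.mk (p i).1 (p i).2) := by
      intro m
      induction m with
      | zero => intro i h; exact h1 i h
      | succ m ihm =>
        intro i h
        have h' : i.val + m + 1 < K := by omega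
        exact htrans _ _ _ (h1 ⟨i.val + m + 1, h'⟩ h) (ihm i h')
    have chain : ∀ (i j : Fin K), i.val < j.val →
        lt (WType.mk (p j).1 (p j).2) (WType.mk (p i).1 (p i).2) := by
      intro i j hij
      have hj : j = ⟨i.val + (j.val - i.val - 1) + 1, by omega⟩ :=
        Fin.ext (by simp only [Fin.val_mk]; omega)
      rw [hj]
      exact chain0 _ i _
    set t : Term F ar := WType.mk (p ⟨K - 1, by omega⟩).1 (p ⟨K - 1, by omega⟩).2 with ht
    have claim : ∀ s, lt s t → Acc lt s := by
      intro s
      induction s with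
      | mk g b ihb =>
        intro hs
        have comps : ∀ j, Acc lt (b j) := fun j =>
          ihb j (htrans _ _ _ (hsub g b j) hs)
        by_cases hex : ∃ i : Fin K, g = (p i).1
        · obtain ⟨i, rfl⟩ := hex
          have hlti : lt (WType.mk (p i).1 b) (WType.mk (p i).1 (p i).2) := by
            rcases eq_or_lt_of_le (show i.val ≤ K - 1 by omega) with heq | hlt
            · have hi' : i = ⟨K - 1, by omega⟩ := Fin.ext heq
              have he : WType.mk (p i).1 (p i).2 = t := by rw [hi']
              rw [he]; exact hs
            · exact htrans _ _ _ hs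
                (chain i ⟨K - 1, by omega⟩ (by simp only [Fin.val_mk]; omega))
          rcases hdec _ (p i).2 b hlti with ⟨idx, heq | hlt'⟩ | hltf
          · rw [heq]; exact h3 i idx
          · exact (h3 i idx).inv hlt'
          · apply h2 i b hltf _ comps
            intro hipos
            exact htrans _ _ _ hlti
              (chain ⟨i.val - 1, by omega⟩ i (by simp only [Fin.val_mk]; omega))
        · push_neg at hex
          have D : ∀ b', Acc (ltf g) b' → (∀ j, Acc lt (b' j)) →
              lt (WType.mk g b') t → Acc lt (WType.mk g b') := by
            intro b' accb'
            induction accb' with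
            | intro b' _ ihD =>
              intro comps' hlt'
              set q : Fin (K + 1) → Σ g : F, (Fin (ar g) → Term F ar) :=
                Fin.snoc p ⟨g, b'⟩ with hq
              have ps1 : ∀ (i : Fin (K + 1)) (h : i.val < K), q i = p ⟨i.val, h⟩ := by
                intro i h
                have hic : i = Fin.castSucc ⟨i.val, h⟩ := by ext; simp
                rw [hq]
                conv_lhs => rw [hic]
                rw [Fin.snoc_castSucc]
              have ps2 : ∀ (i : Fin (K + 1)), i.val = K → q i = ⟨g, b'⟩ := by
                intro i h
                have hil : i = Fin.last K := by ext; simpa using h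
                rw [hq]
                conv_lhs => rw [hil]
                rw [Fin.snoc_last]
              have main := IH (K + 1) (by omega) (by omega) q ?_ ?_ ?_ ?_
              · rw [ps2 ⟨K + 1 - 1, by omega⟩ rfl] at main
                exact main
              · -- injectivity
                intro i j hij
                simp only at hij
                rcases lt_or_ge i.val K with hi | hi
                · rcases lt_or_ge j.val K with hj | hj
                  · rw [ps1 i hi, ps1 j hj] at hij
                    have hv : ((⟨i.val, hi⟩ : Fin K) : ℕ) = ((⟨j.val, hj⟩ : Fin K) : ℕ) :=
                      congrArg Fin.val (hinj hij)
                    simp only [Fin.val_mk] at hv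
                    exact Fin.ext hv
                  · rw [ps1 i hi, ps2 j (by omega)] at hij
                    exact absurd hij.symm (hex ⟨i.val, hi⟩)
                · rcases lt_or_ge j.val K with hj | hj
                  · rw [ps2 i (by omega), ps1 j hj] at hij
                    exact absurd hij (hex ⟨j.val, hj⟩)
                  · have hi' := i.isLt
                    have hj' := j.isLt
                    exact Fin.ext (by omega)
              · -- h1
                intro i h
                rcases lt_or_ge (i.val + 1) K with hi | hi
                · rw [ps1 ⟨i.val + 1, h⟩ hi, ps1 i (by omega)]
                  exact h1 ⟨i.val, by omega⟩ hi
                · have hiK : i.val = K - 1 := by omega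
                  rw [ps2 ⟨i.val + 1, h⟩ (by simp only [Fin.val_mk]; omega),
                      ps1 i (by omega)]
                  have : (⟨i.val, by omega⟩ : Fin K) = ⟨K - 1, by omega⟩ := Fin.ext hiK
                  rw [this]
                  exact hlt'
              · -- h2
                intro i
                rcases lt_or_ge i.val K with hi | hi
                · have hm : i.val - 1 < K := by omega
                  have hm1 : i.val - 1 < K + 1 := by omega
                  rw [ps1 i hi]
                  have dbg : q ⟨i.val - 1, hm1⟩ = p ⟨i.val - 1, hm⟩ := ps1 _ hm
                  intro c hc hcond ccomps
                  refine h2 ⟨i.val, hi⟩ c hc (fun h0 => ?_) ccomps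
                  have hx := hcond h0
                  rw [dbg] at hx
                  exact hx
                · have hm : i.val - 1 < K := by omega
                  have hm1 : i.val - 1 < K + 1 := by omega
                  rw [ps2 i (by omega)]
                  have dbg : q ⟨i.val - 1, hm1⟩ = p ⟨i.val - 1, hm⟩ := ps1 _ hm
                  intro c hc hcond ccomps
                  apply ihD c hc ccomps
                  have hltc := hcond (by omega)
                  rw [dbg] at hltc
                  have hidx : (⟨i.val - 1, hm⟩ : Fin K) = ⟨K - 1, by omega⟩ :=
                    Fin.ext (by simp only [Fin.val_mk]; omega)
                  rw [hidx] at hltc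
                  exact hltc
              · -- h3
                intro i
                rcases lt_or_ge i.val K with hi | hi
                · rw [ps1 i hi]; exact h3 _
                · rw [ps2 i (by omega)]; exact comps'
          exact D b (hacc g b comps) comps hs
    exact Acc.intro t claim

theorem ferreira_zantema_main_lemma
    {F : Type} [Fintype F] [Nonempty F] (ar : F → ℕ)
    (lt : Term F ar → Term F ar → Prop)
    (ltf : ∀ f : F, (Fin (ar f) → Term F ar) → (Fin (ar f) → Term F ar) → Prop)
    (hirr : ∀ t, ¬ lt t t)
    (htrans : ∀ s t u, lt s t → lt t u → lt s u)
    (hsub : ∀ (f : F) (a : Fin (ar f) → Term F ar) (i : Fin (ar f)),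
      lt (a i) (WType.mk f a))
    (hdec : ∀ (f : F) (a b : Fin (ar f) → Term F ar),
      lt (WType.mk f b) (WType.mk f a) →
      (∃ i, WType.mk f b = a i ∨ lt (WType.mk f b) (a i)) ∨ ltf f b a)
    (hacc : ∀ (f : F) (a : Fin (ar f) → Term F ar),
      (∀ i, Acc lt (a i)) → Acc (ltf f) a)
    (K : ℕ) (hK : 0 < K)
    (f : Fin K → F) (hinj : Function.Injective f)
    (a : ∀ i : Fin K, Fin (ar (f i)) → Term F ar)
    -- (1): f_{i+1}(a_{i+1}) < f_i(a_i)
    (h1 : ∀ (i : Fin K) (h : i.val + 1 < K),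
      lt (WType.mk (f ⟨i.val + 1, h⟩) (a ⟨i.val + 1, h⟩)) (WType.mk (f i) (a i)))
    -- (2): IH_{f_i, i-1}(a_i)
    (h2 : ∀ (i : Fin K) (b : Fin (ar (f i)) → Term F ar), ltf (f i) b (a i) →
      (∀ h : 0 < i.val,
         lt (WType.mk (f i) b)
            (WType.mk (f ⟨i.val - 1, by omega⟩) (a ⟨i.val - 1, by omega⟩))) →
      (∀ j, Acc lt (b j)) → Acc lt (WType.mk (f i) b))
    -- (3): every component of a_i is in W(<)
    (h3 : ∀ (i : Fin K) (j : Fin (ar (f i))), Acc lt (a i j)) :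
    Acc lt (WType.mk (f ⟨K - 1, by omega⟩) (a ⟨K - 1, by omega⟩)) := by
  exact fz_aux ar lt ltf htrans hsub hdec hacc (Fintype.card F + 1) K hK (by omega)
    (fun i => ⟨f i, a i⟩) hinj h1 h2 h3
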